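/- Let ⟨C_α : α < ω₁⟩ be a C-sequence and β a nonzero countable limit ordinal. Then the minimum of the lower trace L(α, β) tends to β as α tends to β from below; that is, for every γ < β there exists γ' < β such that for all α with γ' < α < β, min L(α, β) > γ. -/

import Mathlib

open Ordinal Set

/-- The first uncountable ordinal. -/
noncomputable def omega1 : Ordinal := (Cardinal.aleph 1).ord

/-- `C` is a C-sequence: `C (α+1) = {α}` and, for nonzero countable limit `α`,
`C α` is a cofinal subset of `α` of order type `ω` (equivalently: infinite with
all proper initial segments finite). -/
def IsCSeq (C : Ordinal → Set Ordinal) : Prop :=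
  (∀ α : Ordinal, C (α + 1) = {α}) ∧
  ∀ α : Ordinal, α < omega1 → Order.IsSuccLimit α →
    C α ⊆ Set.Iio α ∧ (∀ β < α, ∃ γ ∈ C α, β ≤ γ) ∧ (C α).Infinite ∧
      ∀ β < α, (C α ∩ Set.Iio β).Finite

/-- `L` satisfies the defining recursion of the lower trace of the minimal walk:
`L(α,α) = ∅` and, for `α < β`,
`L(α,β) = (L(α, min(C_β \ α)) ∪ {max(C_β ∩ α)}) \ max(C_β ∩ α)`
(where the subtraction removes all ordinals below `max(C_β ∩ α)`). -/
def LowerTraceEqns (C : Ordinal → Set Ordinal) (L : Ordinal → Ordinal → Finset Ordinal) :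
    Prop :=
  (∀ α : Ordinal, L α α = ∅) ∧
  (∀ α β : Ordinal, α < β → (C β ∩ Set.Iio α).Nonempty →
    (L α β : Set Ordinal) =
      {ξ ∈ (L α (sInf (C β \ Set.Iio α)) : Set Ordinal) ∪ {sSup (C β ∩ Set.Iio α)} |
        sSup (C β ∩ Set.Iio α) ≤ ξ}) ∧
  (∀ α β : Ordinal, α < β → C β ∩ Set.Iio α = ∅ →
    L α β = L α (sInf (C β \ Set.Iio α)))

/-- `ρ` satisfies the defining recursion of the maximal weight `ρ₁`:
`ρ₁(α,α) = 0` and `ρ₁(α,β) = max(|C_β ∩ α|, ρ₁(α, min(C_β \ α)))` for `α < β`. -/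
def Rho1Eqns (C : Ordinal → Set Ordinal) (ρ : Ordinal → Ordinal → ℕ) : Prop :=
  (∀ α : Ordinal, ρ α α = 0) ∧
  ∀ α β : Ordinal, α < β →
    ρ α β = max (C β ∩ Set.Iio α).ncard (ρ α (sInf (C β \ Set.Iio α)))

/-- For a nonzero countable limit `β`, `min L(α, β) → β` as `α → β` from below. -/
theorem stmt12 (C : Ordinal → Set Ordinal) (hC : IsCSeq C)
    (L : Ordinal → Ordinal → Finset Ordinal) (hL : LowerTraceEqns C L)
    (β : Ordinal) (hβ1 : β < omega1) (hβ2 : Order.IsSuccLimit β) :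
    ∀ γ < β, ∃ γ' < β, ∀ α : Ordinal, γ' < α → α < β →
      (L α β).Nonempty ∧ ∀ ξ ∈ L α β, γ < ξ := by
  intro γ hγ
  obtain ⟨_, hcof, _, _⟩ := hC.2 β hβ1 hβ2
  obtain ⟨δ, hδC, hδge⟩ := hcof (γ + 1) (hβ2.succ_lt hγ)
  have hδβ : δ < β := (hC.2 β hβ1 hβ2).1 hδC
  refine ⟨δ, hδβ, fun α hδα hαβ => ?_⟩
  have hne : (C β ∩ Set.Iio α).Nonempty := ⟨δ, hδC, hδα⟩
  have heq := hL.2.1 α β hαβ hne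
  set m := sSup (C β ∩ Set.Iio α) with hm
  have hbdd : BddAbove (C β ∩ Set.Iio α) := ⟨α, fun x hx => le_of_lt hx.2⟩
  have hδm : δ ≤ m := le_csSup hbdd ⟨hδC, hδα⟩
  have hγm : γ < m := lt_of_lt_of_le (lt_of_lt_of_le (Order.lt_succ γ) hδge) hδm
  have hmem : m ∈ L α β := by
    have : m ∈ (L α β : Set Ordinal) := by
      rw [heq]
      exact ⟨Or.inr rfl, le_refl m⟩
    simpa using this
  refine ⟨⟨m, hmem⟩, fun ξ hξ => ?_⟩
  have : ξ ∈ (L α β : Set Ordinal) := by simpa using hξ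
  rw [heq] at this
  exact lt_of_lt_of_le hγm this.2
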